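/- Type-based strong converse for the rate-distortion problem: let d be bounded with d̄ := max_{x,x̂} d(x,x̂), fix n ∈ ℕ and a type Q_X ∈ 𝒫_n(𝒳), and let X^n be uniformly distributed over the type class T_{Q_X}. If an (n,M)-code satisfies Pr{d(X^n, φ(f(X^n))) ≤ D} ≥ 1/n, then log M ≥ n R(Q_X, D + d̄/n) − (|𝒳| log(n+1) + 2 log n). -/

import Mathlib

/-!
Type-based strong converse for the rate-distortion problem (Lemma `type:sc`).
-/

open scoped BigOperators

noncomputable section

/-- Probability of an event under a pmf on a finite space. -/
def Pr {Ω : Type*} [Fintype Ω] (μ : Ω → ℝ) (A : Set Ω) : ℝ :=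
  ∑ ω, A.indicator μ ω

/-- Average per-letter distortion of a block. -/
def distn {α β : Type*} {n : ℕ} (d : α → β → ℝ) (xs : Fin n → α) (ys : Fin n → β) : ℝ :=
  (∑ i, d (xs i) (ys i)) / n

/-- A conditional pmf (test channel). -/
def IsChannel {α β : Type*} [Fintype β] (W : α → β → ℝ) : Prop :=
  ∀ a, (∀ b, 0 ≤ W a b) ∧ ∑ b, W a b = 1

/-- Mutual information `I(p, W)`. -/
def mutInfo {α β : Type*} [Fintype α] [Fintype β] (p : α → ℝ) (W : α → β → ℝ) : ℝ :=
  ∑ a, ∑ b, p a * W a b * Real.log (W a b / (∑ a', p a' * W a' b))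

/-- The rate-distortion function `R(p, D)`. -/
def RDfun {α β : Type*} [Fintype α] [Fintype β] (p : α → ℝ) (d : α → β → ℝ) (D : ℝ) : ℝ :=
  sInf {r | ∃ W : α → β → ℝ, IsChannel W ∧
    (∑ a, ∑ b, p a * W a b * d a b) ≤ D ∧ r = mutInfo p W}

/-- The type class of an `n`-type `Q`: sequences whose empirical distribution is `Q`. -/
def typeClass {𝒳 : Type} [Fintype 𝒳] [DecidableEq 𝒳] (n : ℕ) (Q : 𝒳 → ℝ) :
    Set (Fin n → 𝒳) :=
  {xs | ∀ a, ((Finset.univ.filter (fun i => xs i = a)).card : ℝ) = n * Q a}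

/-- Uniform pmf on a subset of a finite space. -/
def unifOn {Ω : Type*} [Fintype Ω] (T : Set Ω) : Ω → ℝ :=
  fun ω => T.indicator (fun _ => (1 : ℝ)) ω / T.ncard



section AuxLemmas
open Finset

lemma gibbs {ι : Type*} [Fintype ι] (μ ν : ι → ℝ)
    (hμ0 : ∀ i, 0 ≤ μ i) (hν0 : ∀ i, 0 ≤ ν i)
    (hμ1 : ∑ i, μ i = 1) (hν1 : ∑ i, ν i ≤ 1)
    (habs : ∀ i, ν i = 0 → μ i = 0) :
    ∑ i, μ i * Real.log (ν i / μ i) ≤ 0 := by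
  have hterm : ∀ i, μ i * Real.log (ν i / μ i) ≤ ν i - μ i := by
    intro i
    rcases eq_or_lt_of_le (hμ0 i) with h | h
    · simp [← h, hν0 i]
    · have hν : 0 < ν i := by
        rcases eq_or_lt_of_le (hν0 i) with h' | h'
        · exact absurd (habs i h'.symm) (by positivity)
        · exact h'
      have hlog : Real.log (ν i / μ i) ≤ ν i / μ i - 1 :=
        Real.log_le_sub_one_of_pos (by positivity)
      calc μ i * Real.log (ν i / μ i) ≤ μ i * (ν i / μ i - 1) := by
            exact mul_le_mul_of_nonneg_left hlog h.le
        _ = ν i - μ i := by field_simp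
  calc ∑ i, μ i * Real.log (ν i / μ i) ≤ ∑ i, (ν i - μ i) := Finset.sum_le_sum fun i _ => hterm i
    _ = (∑ i, ν i) - 1 := by rw [Finset.sum_sub_distrib, hμ1]
    _ ≤ 0 := by linarith

lemma mutInfo_nonneg {α β : Type*} [Fintype α] [Fintype β] (p : α → ℝ) (W : α → β → ℝ)
    (hp0 : ∀ a, 0 ≤ p a) (hp1 : ∑ a, p a = 1) (hW : IsChannel W) :
    0 ≤ mutInfo p W := by
  set PW : β → ℝ := fun b => ∑ a', p a' * W a' b with hPW
  have hPW0 : ∀ b, 0 ≤ PW b := fun b =>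
    Finset.sum_nonneg fun a _ => mul_nonneg (hp0 a) ((hW a).1 b)
  have key : ∑ x : α × β, (p x.1 * W x.1 x.2) *
      Real.log ((p x.1 * PW x.2) / (p x.1 * W x.1 x.2)) ≤ 0 := by
    apply gibbs
    · intro x; exact mul_nonneg (hp0 x.1) ((hW x.1).1 x.2)
    · intro x; exact mul_nonneg (hp0 x.1) (hPW0 x.2)
    · rw [Fintype.sum_prod_type]
      calc ∑ a, ∑ b, p a * W a b = ∑ a, p a * ∑ b, W a b := by
            simp [Finset.mul_sum]
        _ = 1 := by simp only [(hW _).2, mul_one, hp1]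
    · rw [Fintype.sum_prod_type]
      have : ∀ a : α, ∑ b, p a * PW b = p a * ∑ b, PW b := by
        intro a; rw [Finset.mul_sum]
      have h2 : ∑ b, PW b = 1 := by
        rw [hPW, Finset.sum_comm]
        calc ∑ a, ∑ b, p a * W a b = ∑ a, p a * ∑ b, W a b := by simp [Finset.mul_sum]
          _ = 1 := by simp only [(hW _).2, mul_one, hp1]
      simp only [this, h2, mul_one, hp1, le_refl]
    · intro x hx
      rcases mul_eq_zero.1 hx with h | h
      · rw [h, zero_mul]
      · have : p x.1 * W x.1 x.2 ≤ PW x.2 := by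
          apply Finset.single_le_sum (f := fun a' => p a' * W a' x.2)
            (fun a _ => mul_nonneg (hp0 a) ((hW a).1 x.2)) (Finset.mem_univ x.1)
        have h0 : p x.1 * W x.1 x.2 = 0 :=
          le_antisymm (by rwa [h] at this) (mul_nonneg (hp0 x.1) ((hW x.1).1 x.2))
        exact h0
  have heq : ∀ x : α × β, (p x.1 * W x.1 x.2) *
      Real.log ((p x.1 * PW x.2) / (p x.1 * W x.1 x.2))
      = -((p x.1 * W x.1 x.2) * Real.log (W x.1 x.2 / PW x.2)) := by
    intro ⟨a, b⟩
    rcases eq_or_ne (p a * W a b) 0 with h | h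
    · simp [h]
    · have hpa : p a ≠ 0 := fun h' => h (by simp [h'])
      have hWab : W a b ≠ 0 := fun h' => h (by simp [h'])
      have hPWb : PW b ≠ 0 := by
        intro h'
        have : p a * W a b ≤ PW b :=
          Finset.single_le_sum (f := fun a' => p a' * W a' b)
            (fun a _ => mul_nonneg (hp0 a) ((hW a).1 b)) (Finset.mem_univ a)
        have := le_antisymm (h' ▸ this) (mul_nonneg (hp0 a) ((hW a).1 b))
        exact h this
      have : (p a * PW b) / (p a * W a b) = PW b / W a b := by
        rw [mul_div_mul_left _ _ hpa]
      rw [this, Real.log_div hPWb hWab, Real.log_div hWab hPWb]; ring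
  have : mutInfo p W = ∑ x : α × β, (p x.1 * W x.1 x.2) * Real.log (W x.1 x.2 / PW x.2) := by
    rw [mutInfo, Fintype.sum_prod_type]
  rw [this]
  have := key
  simp only [heq] at this
  rw [Finset.sum_neg_distrib] at this
  linarith

lemma binom_term_le (n k j : ℕ) (hk : k ≤ n) :
    n.choose j * (k ^ j * (n - k) ^ (n - j)) ≤ n.choose k * (k ^ k * (n - k) ^ (n - k)) := by
  set g : ℕ → ℕ := fun j => n.choose j * (k ^ j * (n - k) ^ (n - j)) with hg
  have up : ∀ j, j < k → g j ≤ g (j + 1) := by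
    intro j hj
    have hjn : j < n := lt_of_lt_of_le hj hk
    have hpow : (n - k) ^ (n - j) = (n - k) ^ (n - (j+1)) * (n - k) := by
      rw [← pow_succ]; congr 1; omega
    have key : n.choose j * (n - k) ≤ n.choose (j+1) * k := by
      have h1 : n.choose (j+1) * (j+1) = n.choose j * (n - j) := Nat.choose_succ_right_eq n j
      have h2 : (n - k) * (j + 1) ≤ (n - j) * k :=
        Nat.mul_le_mul (by omega) (by omega)
      have h3 : n.choose j * (n - k) * (j + 1) ≤ n.choose (j+1) * k * (j + 1) := by
        calc n.choose j * (n - k) * (j + 1) = n.choose j * ((n - k) * (j+1)) := by ring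
          _ ≤ n.choose j * ((n - j) * k) := Nat.mul_le_mul_left _ h2
          _ = (n.choose j * (n - j)) * k := by ring
          _ = (n.choose (j+1) * (j+1)) * k := by rw [h1]
          _ = n.choose (j+1) * k * (j+1) := by ring
      exact Nat.le_of_mul_le_mul_right h3 (Nat.succ_pos j)
    calc g j = (n.choose j * (n - k)) * (k ^ j * (n - k) ^ (n - (j+1))) := by
          simp only [hg]; rw [hpow]; ring
      _ ≤ (n.choose (j+1) * k) * (k ^ j * (n - k) ^ (n - (j+1))) :=
          Nat.mul_le_mul_right _ key
      _ = g (j+1) := by simp only [hg]; rw [pow_succ]; ring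
  have down : ∀ j, k ≤ j → g (j + 1) ≤ g j := by
    intro j hj
    rcases le_or_gt n j with hnj | hjn
    · have h0 : n.choose (j+1) = 0 := Nat.choose_eq_zero_of_lt (by omega)
      simp [hg, h0]
    · have hpow : (n - k) ^ (n - j) = (n - k) ^ (n - (j+1)) * (n - k) := by
        rw [← pow_succ]; congr 1; omega
      have key : n.choose (j+1) * k ≤ n.choose j * (n - k) := by
        have h1 : n.choose (j+1) * (j+1) = n.choose j * (n - j) := Nat.choose_succ_right_eq n j
        have h2 : (n - j) * k ≤ (n - k) * (j + 1) :=
          Nat.mul_le_mul (by omega) (by omega)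
        have h3 : n.choose (j+1) * k * (j + 1) ≤ n.choose j * (n - k) * (j + 1) := by
          calc n.choose (j+1) * k * (j + 1) = (n.choose (j+1) * (j+1)) * k := by ring
            _ = (n.choose j * (n - j)) * k := by rw [h1]
            _ = n.choose j * ((n - j) * k) := by ring
            _ ≤ n.choose j * ((n - k) * (j+1)) := Nat.mul_le_mul_left _ h2
            _ = n.choose j * (n - k) * (j+1) := by ring
        exact Nat.le_of_mul_le_mul_right h3 (Nat.succ_pos j)
      calc g (j+1) = (n.choose (j+1) * k) * (k ^ j * (n - k) ^ (n - (j+1))) := by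
            simp only [hg]; rw [pow_succ]; ring
        _ ≤ (n.choose j * (n - k)) * (k ^ j * (n - k) ^ (n - (j+1))) :=
            Nat.mul_le_mul_right _ key
        _ = g j := by simp only [hg]; rw [hpow]; ring
  rcases le_or_gt j k with h | h
  · have climb : ∀ m, m ≤ k → g (k - m) ≤ g k := by
      intro m
      induction m with
      | zero => simp
      | succ m ih =>
        intro hm
        have h1 : k - (m+1) < k := by omega
        calc g (k - (m+1)) ≤ g (k - (m+1) + 1) := up _ h1
          _ = g (k - m) := by congr 1; omega
          _ ≤ g k := ih (by omega)
    have := climb (k - j) (by omega)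
    rwa [show k - (k - j) = j by omega] at this
  · have desc : ∀ m, g (k + m) ≤ g k := by
      intro m
      induction m with
      | zero => simp
      | succ m ih =>
        calc g (k + (m+1)) = g (k + m + 1) := rfl
          _ ≤ g (k + m) := down _ (by omega)
          _ ≤ g k := ih
    have := desc (j - k)
    rwa [show k + (j - k) = j by omega] at this

lemma binom_bound (n k : ℕ) (hk : k ≤ n) :
    n ^ n ≤ (n + 1) * (n.choose k * (k ^ k * (n - k) ^ (n - k))) := by
  have hadd : k + (n - k) = n := by omega
  have hexp := add_pow k (n - k) n
  rw [hadd] at hexp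
  rw [hexp]
  calc ∑ j ∈ range (n + 1), k ^ j * (n - k) ^ (n - j) * n.choose j
      ≤ ∑ _j ∈ range (n + 1), n.choose k * (k ^ k * (n - k) ^ (n - k)) := by
        apply Finset.sum_le_sum
        intro j _
        calc k ^ j * (n - k) ^ (n - j) * n.choose j
            = n.choose j * (k ^ j * (n - k) ^ (n - j)) := by ring
          _ ≤ _ := binom_term_le n k j hk
    _ = (n + 1) * (n.choose k * (k ^ k * (n - k) ^ (n - k))) := by
        rw [Finset.sum_const, card_range]; simp [Nat.smul_one_eq_cast]

lemma multi_bound {𝒳 : Type*} [DecidableEq 𝒳] (A : Finset 𝒳) :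
    ∀ (k : 𝒳 → ℕ) (n : ℕ), (∑ a ∈ A, k a) = n →
    n ^ n * ∏ a ∈ A, (k a).factorial ≤
      (n + 1) ^ A.card * n.factorial * ∏ a ∈ A, (k a) ^ (k a) := by
  induction A using Finset.induction with
  | empty =>
    intro k n hn
    simp at hn
    subst hn
    simp
  | @insert a A ha ih =>
    intro k n hn
    rw [Finset.sum_insert ha] at hn
    set m := ∑ a ∈ A, k a with hm
    have hka : k a ≤ n := by omega
    have hmn : m = n - k a := by omega
    have ihm := ih k m rfl
    have hb := binom_bound n (k a) hka
    rw [← hmn] at hb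
    rw [Finset.prod_insert ha, Finset.prod_insert ha, Finset.card_insert_of_notMem ha]
    calc n ^ n * ((k a).factorial * ∏ x ∈ A, (k x).factorial)
        ≤ ((n + 1) * (n.choose (k a) * ((k a) ^ (k a) * m ^ m))) *
            ((k a).factorial * ∏ x ∈ A, (k x).factorial) := by
          exact Nat.mul_le_mul_right _ hb
      _ = (n + 1) * (k a) ^ (k a) * (n.choose (k a) * (k a).factorial) *
            (m ^ m * ∏ x ∈ A, (k x).factorial) := by ring
      _ ≤ (n + 1) * (k a) ^ (k a) * (n.choose (k a) * (k a).factorial) *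
            ((m + 1) ^ A.card * m.factorial * ∏ x ∈ A, (k x) ^ (k x)) :=
          Nat.mul_le_mul_left _ ihm
      _ ≤ (n + 1) * (k a) ^ (k a) * (n.choose (k a) * (k a).factorial) *
            ((n + 1) ^ A.card * m.factorial * ∏ x ∈ A, (k x) ^ (k x)) := by
          apply Nat.mul_le_mul_left
          apply Nat.mul_le_mul_right
          apply Nat.mul_le_mul_right
          exact Nat.pow_le_pow_left (by omega) _
      _ = (n + 1) ^ (A.card + 1) * (n.choose (k a) * (k a).factorial * m.factorial) *
            ((k a) ^ (k a) * ∏ x ∈ A, (k x) ^ (k x)) := by ring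
      _ = (n + 1) ^ (A.card + 1) * n.factorial *
            ((k a) ^ (k a) * ∏ x ∈ A, (k x) ^ (k x)) := by
          congr 2
          rw [hmn]
          exact Nat.choose_mul_factorial_mul_factorial hka

lemma perm_count {𝒳 : Type} [Fintype 𝒳] [DecidableEq 𝒳] (n : ℕ) (k : 𝒳 → ℕ)
    (Tfin : Finset (Fin n → 𝒳))
    (hT : ∀ x, x ∈ Tfin ↔ ∀ a, (univ.filter fun i => x i = a).card = k a)
    (hne : Tfin.Nonempty) :
    n.factorial ≤ Tfin.card * ∏ a, (k a).factorial := by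
  classical
  obtain ⟨x₀, hx₀⟩ := hne
  have hx₀' := (hT x₀).1 hx₀
  set F : Equiv.Perm (Fin n) → (Fin n → 𝒳) := fun σ => x₀ ∘ σ with hF
  have hmaps : ∀ σ : Equiv.Perm (Fin n), F σ ∈ Tfin := by
    intro σ
    rw [hT]
    intro a
    rw [← hx₀' a]
    apply Finset.card_bij (fun i _ => σ i)
    · intro i hi
      simp only [hF, mem_filter, mem_univ, true_and, Function.comp] at hi ⊢
      exact hi
    · intro i hi j hj hij
      exact σ.injective hij
    · intro j hj
      simp only [hF, mem_filter, mem_univ, true_and, Function.comp] at hj ⊢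
      exact ⟨σ.symm j, by simp [hj], by simp⟩
  have hcard : n.factorial = ∑ x ∈ Tfin, (univ.filter fun σ : Equiv.Perm (Fin n) => F σ = x).card := by
    rw [← Finset.card_eq_sum_card_fiberwise (fun σ _ => hmaps σ), Finset.card_univ,
      Fintype.card_perm, Fintype.card_fin]
  have hfiber : ∀ x ∈ Tfin, (univ.filter fun σ : Equiv.Perm (Fin n) => F σ = x).card
      ≤ ∏ a, (k a).factorial := by
    intro x hx
    have hx' := (hT x).1 hx
    have hcards : ∀ a, Fintype.card {i // x i = a} = k a := by
      intro a; rw [Fintype.card_subtype]; exact hx' a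
    have hcards₀ : ∀ a, Fintype.card {i // x₀ i = a} = k a := by
      intro a; rw [Fintype.card_subtype]; exact hx₀' a
    have hEcard : Fintype.card (∀ a : 𝒳, ({i // x i = a} ↪ {i // x₀ i = a}))
        = ∏ a, (k a).factorial := by
      rw [Fintype.card_pi]
      apply Finset.prod_congr rfl
      intro a _
      rw [Fintype.card_embedding_eq, hcards a, hcards₀ a, Nat.descFactorial_self]
    haveI hnonempty : ∀ a : 𝒳, Nonempty ({i // x i = a} ↪ {i // x₀ i = a}) := by
      intro a
      exact Function.Embedding.nonempty_of_card_le (by rw [hcards a, hcards₀ a])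
    haveI : Nonempty (∀ a : 𝒳, ({i // x i = a} ↪ {i // x₀ i = a})) :=
      ⟨fun a => Classical.arbitrary _⟩
    set E : Equiv.Perm (Fin n) → (∀ a : 𝒳, ({i // x i = a} ↪ {i // x₀ i = a})) :=
      fun σ => if h : F σ = x then
        (fun a => ⟨fun i => ⟨σ i.1, by
            have h1 : x₀ (σ i.1) = x i.1 := congrFun h i.1
            rw [h1, i.2]⟩, by
            intro i j hij
            apply Subtype.ext
            exact σ.injective (congrArg Subtype.val hij)⟩)
      else Classical.arbitrary _ with hE
    rw [← hEcard, ← Finset.card_univ]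
    apply Finset.card_le_card_of_injOn E (fun σ _ => mem_univ _)
    intro σ hσ τ hτ hEq
    simp only [mem_coe, mem_filter, mem_univ, true_and] at hσ hτ
    apply Equiv.ext
    intro i
    have e1 := congrFun hEq (x i)
    simp only [hE, dif_pos hσ, dif_pos hτ] at e1
    have e2 := congrFun (congrArg (fun (e : {j // x j = x i} ↪ {j // x₀ j = x i}) => e.toFun) e1) ⟨i, rfl⟩
    exact congrArg Subtype.val e2
  calc n.factorial = ∑ x ∈ Tfin, (univ.filter fun σ : Equiv.Perm (Fin n) => F σ = x).card := hcard
    _ ≤ ∑ _x ∈ Tfin, ∏ a, (k a).factorial := Finset.sum_le_sum hfiber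
    _ = Tfin.card * ∏ a, (k a).factorial := by rw [Finset.sum_const, smul_eq_mul]

lemma sum_count {𝒳 Xh : Type} [Fintype 𝒳] [Fintype Xh] [DecidableEq 𝒳] [DecidableEq Xh]
    {n : ℕ} (x : Fin n → 𝒳) (y : Fin n → Xh) (g : 𝒳 → Xh → ℝ) :
    ∑ i, g (x i) (y i)
      = ∑ a, ∑ b, ((univ.filter fun i => x i = a ∧ y i = b).card : ℝ) * g a b := by
  rw [← Fintype.sum_prod_type
    (f := fun p : 𝒳 × Xh => ((univ.filter fun i => x i = p.1 ∧ y i = p.2).card : ℝ) * g p.1 p.2)]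
  rw [← Finset.sum_fiberwise univ (fun i => (x i, y i)) (fun i => g (x i) (y i))]
  apply Finset.sum_congr rfl
  intro p _
  have hpred : (univ.filter fun i => (x i, y i) = p) = (univ.filter fun i => x i = p.1 ∧ y i = p.2) := by
    apply Finset.filter_congr
    intro i _
    constructor
    · intro h; rw [← h]; exact ⟨rfl, rfl⟩
    · intro ⟨h1, h2⟩
      rw [Prod.ext_iff]
      exact ⟨h1, h2⟩
  calc ∑ i ∈ univ.filter fun i => (x i, y i) = p, g (x i) (y i)
      = ∑ i ∈ univ.filter fun i => (x i, y i) = p, g p.1 p.2 := by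
        apply Finset.sum_congr rfl
        intro i hi
        simp only [mem_filter] at hi
        rw [← hi.2]
    _ = ((univ.filter fun i => (x i, y i) = p).card : ℝ) * g p.1 p.2 := by
        rw [Finset.sum_const, nsmul_eq_mul]
    _ = _ := by rw [hpred]

lemma count_split {𝒳 Xh : Type} [Fintype 𝒳] [Fintype Xh] [DecidableEq 𝒳] [DecidableEq Xh]
    {n : ℕ} (x : Fin n → 𝒳) (y : Fin n → Xh) (a : 𝒳) :
    (univ.filter fun i => x i = a).card
      = ∑ b, (univ.filter fun i => x i = a ∧ y i = b).card := by
  rw [Finset.card_eq_sum_card_fiberwise (f := y) (t := univ) (fun i _ => mem_univ _)]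
  apply Finset.sum_congr rfl
  intro b _
  rw [Finset.filter_filter]

lemma count_split' {𝒳 Xh : Type} [Fintype 𝒳] [Fintype Xh] [DecidableEq 𝒳] [DecidableEq Xh]
    {n : ℕ} (x : Fin n → 𝒳) (y : Fin n → Xh) (b : Xh) :
    (univ.filter fun i => y i = b).card
      = ∑ a, (univ.filter fun i => x i = a ∧ y i = b).card := by
  rw [Finset.card_eq_sum_card_fiberwise (f := x) (t := univ) (fun i _ => mem_univ _)]
  apply Finset.sum_congr rfl
  intro a _
  rw [Finset.filter_filter]
  congr 1
  apply Finset.filter_congr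
  intro i _
  constructor
  · intro ⟨h1, h2⟩; exact ⟨h2, h1⟩
  · intro ⟨h1, h2⟩; exact ⟨h2, h1⟩

end AuxLemmas
open Finset

/-- **Type-based strong converse for the rate-distortion problem.**
If `X^n` is uniform on the type class of the `n`-type `Q` and an `(n,M)`-code has
non-excess-distortion probability at least `1/n`, then
`log M ≥ n R(Q, D + d̄/n) − (|𝒳| log(n+1) + 2 log n)`. -/
theorem rd_type_strong_converse
    {𝒳 Xh : Type} [Fintype 𝒳] [DecidableEq 𝒳] [Fintype Xh] [Nonempty 𝒳] [Nonempty Xh]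
    (d : 𝒳 → Xh → ℝ) (hd : ∀ x y, 0 ≤ d x y)
    (dbar : ℝ) (hdbar : dbar = ⨆ x, ⨆ y, d x y)
    (D : ℝ) (n : ℕ) (hn : 0 < n)
    (Q : 𝒳 → ℝ) (hQ0 : ∀ x, 0 ≤ Q x) (hQ1 : ∑ x, Q x = 1)
    (hQtype : ∀ a, ∃ k : ℕ, Q a = (k : ℝ) / n)
    (M : ℕ) (f : (Fin n → 𝒳) → Fin M) (φ : Fin M → (Fin n → Xh))
    (hgood : (1 : ℝ) / n ≤
      Pr (unifOn (typeClass n Q)) {xs | distn d xs (φ (f xs)) ≤ D}) :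
    n * RDfun Q d (D + dbar / n)
        - ((Fintype.card 𝒳) * Real.log (n + 1) + 2 * Real.log n) ≤
      Real.log M := by
  classical
  have hn' : (0:ℝ) < n := by exact_mod_cast hn
  have hdbar0 : 0 ≤ dbar := by
    obtain ⟨x0⟩ := ‹Nonempty 𝒳›
    obtain ⟨y0⟩ := ‹Nonempty Xh›
    have h1 : d x0 y0 ≤ ⨆ y, d x0 y :=
      le_ciSup (f := fun y => d x0 y) (Set.Finite.bddAbove (Set.finite_range _)) y0
    have h2 : (⨆ y, d x0 y) ≤ ⨆ x, ⨆ y, d x y :=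
      le_ciSup (f := fun x => ⨆ y, d x y) (Set.Finite.bddAbove (Set.finite_range _)) x0
    rw [hdbar]
    exact le_trans (hd x0 y0) (le_trans h1 h2)
  obtain ⟨T, hTdef⟩ : ∃ T : Set (Fin n → 𝒳), T = typeClass n Q := ⟨_, rfl⟩
  rw [← hTdef] at hgood
  obtain ⟨Tfin, hTfinDef⟩ :
      ∃ Tfin : Finset (Fin n → 𝒳), Tfin = Set.Finite.toFinset (Set.toFinite T) := ⟨_, rfl⟩
  have hmemT : ∀ x, x ∈ Tfin ↔ x ∈ T := by
    intro x; rw [hTfinDef]; exact Set.Finite.mem_toFinset _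
  have hncard : T.ncard = Tfin.card := by
    rw [hTfinDef]; exact Set.ncard_eq_toFinset_card T (Set.toFinite T)
  -- the type as natural numbers
  choose k hk using hQtype
  have hkQ : ∀ a, (n:ℝ) * Q a = (k a : ℝ) := by
    intro a; rw [hk a]; field_simp
  have hsumk : ∑ a, k a = n := by
    have h : ((∑ a, k a : ℕ) : ℝ) = ((n : ℕ) : ℝ) := by
      push_cast
      rw [Finset.sum_congr rfl (fun a _ => (hkQ a).symm), ← Finset.mul_sum, hQ1, mul_one]
    exact_mod_cast h
  have hmemT' : ∀ x, x ∈ Tfin ↔ ∀ a, (Finset.univ.filter fun i => x i = a).card = k a := by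
    intro x
    rw [hmemT, hTdef]
    constructor
    · intro hx a
      have h1 : ((Finset.univ.filter fun i => x i = a).card : ℝ) = (n:ℝ) * Q a := hx a
      rw [hkQ a] at h1
      exact_mod_cast h1
    · intro hx a
      have h1 : ((Finset.univ.filter fun i => x i = a).card : ℝ) = (k a : ℝ) := by
        exact_mod_cast hx a
      rw [h1, ← hkQ a]
  -- probability computation
  obtain ⟨Aset, hAdef⟩ :
      ∃ A : Set (Fin n → 𝒳), A = {xs | distn d xs (φ (f xs)) ≤ D} := ⟨_, rfl⟩
  rw [← hAdef] at hgood
  obtain ⟨G, hGdef⟩ :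
      ∃ G : Finset (Fin n → 𝒳), G = univ.filter (fun x => x ∈ Aset ∧ x ∈ T) := ⟨_, rfl⟩
  have hPr : Pr (unifOn T) Aset = (G.card : ℝ) / (Tfin.card : ℝ) := by
    have hterm : ∀ ω, Aset.indicator (unifOn T) ω
        = if ω ∈ Aset ∧ ω ∈ T then ((Tfin.card : ℝ))⁻¹ else 0 := by
      intro ω
      rw [Set.indicator_apply]
      by_cases h1 : ω ∈ Aset
      · simp only [h1, if_true, true_and]
        by_cases h2 : ω ∈ T
        · simp only [h2, if_true, unifOn, Set.indicator_of_mem h2, hncard, one_div]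
        · simp only [h2, if_false, unifOn, Set.indicator_of_notMem h2, zero_div]
      · simp only [h1, if_false, false_and]
    simp only [Pr]
    rw [Finset.sum_congr rfl (fun ω _ => hterm ω)]
    rw [Finset.sum_ite, Finset.sum_const, Finset.sum_const_zero, add_zero, nsmul_eq_mul]
    rw [← hGdef, div_eq_mul_inv]
  rw [hPr] at hgood
  have hTpos : 0 < Tfin.card := by
    rcases Nat.eq_zero_or_pos Tfin.card with h | h
    · exfalso
      rw [h] at hgood
      simp only [Nat.cast_zero, div_zero] at hgood
      have : (0:ℝ) < 1 / n := by positivity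
      linarith
    · exact h
  have hTpos' : (0:ℝ) < Tfin.card := by exact_mod_cast hTpos
  have hGt : (Tfin.card : ℝ) ≤ (n:ℝ) * G.card := by
    rw [div_le_div_iff₀ hn' hTpos'] at hgood
    linarith
  have hGpos : 0 < G.card := by
    rcases Nat.eq_zero_or_pos G.card with h | h
    · exfalso
      rw [h] at hGt
      rw [Nat.cast_zero, mul_zero] at hGt
      linarith
    · exact h
  -- pigeonhole
  haveI : Nonempty (Fin M) := ⟨f (Classical.arbitrary _)⟩
  have hMpos : 0 < M := (Classical.arbitrary (Fin M)).pos
  obtain ⟨m₀, -, hm₀⟩ := Finset.exists_max_image (univ : Finset (Fin M))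
    (fun m => (G.filter (fun x => f x = m)).card) univ_nonempty
  obtain ⟨C, hCdef⟩ :
      ∃ C : Finset (Fin n → 𝒳), C = G.filter (fun x => f x = m₀) := ⟨_, rfl⟩
  obtain ⟨c, hcdef⟩ : ∃ c : ℕ, c = C.card := ⟨_, rfl⟩
  have hGM : G.card ≤ M * c := by
    calc G.card = ∑ m : Fin M, (G.filter fun x => f x = m).card :=
          Finset.card_eq_sum_card_fiberwise (fun x _ => mem_univ (f x))
      _ ≤ ∑ _m : Fin M, c := Finset.sum_le_sum fun m _ => by
            rw [hcdef, hCdef]; exact hm₀ m (mem_univ m)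
      _ = M * c := by rw [Finset.sum_const, Finset.card_univ, Fintype.card_fin, smul_eq_mul]
  have hcpos : 0 < c := by
    rcases Nat.eq_zero_or_pos c with h | h
    · exfalso; rw [h, Nat.mul_zero] at hGM; omega
    · exact h
  have hcpos' : (0:ℝ) < c := by exact_mod_cast hcpos
  have hcn : (0:ℝ) < (c:ℝ) * n := by positivity
  obtain ⟨y, hydef⟩ : ∃ y : Fin n → Xh, y = φ m₀ := ⟨_, rfl⟩
  have hCmem : ∀ x ∈ C, (∀ a, (univ.filter fun i => x i = a).card = k a) ∧ distn d x y ≤ D := by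
    intro x hx
    rw [hCdef, mem_filter, hGdef, mem_filter] at hx
    obtain ⟨⟨-, hxA, hxT⟩, hfx⟩ := hx
    refine ⟨(hmemT' x).1 ((hmemT x).2 hxT), ?_⟩
    rw [hAdef] at hxA
    have h1 : distn d x (φ (f x)) ≤ D := hxA
    rwa [hfx, ← hydef] at h1
  -- the joint empirical distribution
  obtain ⟨N, hNdef⟩ : ∃ N : (Fin n → 𝒳) → 𝒳 → Xh → ℕ,
      N = fun x a b => (univ.filter fun i => x i = a ∧ y i = b).card := ⟨_, rfl⟩
  obtain ⟨P, hPdef⟩ : ∃ P : 𝒳 → Xh → ℝ,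
      P = fun a b => (∑ x ∈ C, (N x a b : ℝ)) / ((c:ℝ) * n) := ⟨_, rfl⟩
  have hP0 : ∀ a b, 0 ≤ P a b := by
    intro a b
    simp only [hPdef]
    apply div_nonneg _ hcn.le
    exact Finset.sum_nonneg fun x _ => Nat.cast_nonneg _
  have hNsum : ∀ x ∈ C, ∀ a, ∑ b, (N x a b : ℝ) = (k a : ℝ) := by
    intro x hx a
    have h1 := (hCmem x hx).1 a
    have h2 := count_split x y a
    rw [h1] at h2
    simp only [hNdef]
    exact_mod_cast h2.symm
  have hPsum : ∀ a, ∑ b, P a b = Q a := by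
    intro a
    have h1 : ∑ b, ∑ x ∈ C, (N x a b : ℝ) = (c:ℝ) * (k a : ℝ) := by
      rw [Finset.sum_comm, Finset.sum_congr rfl (fun x hx => hNsum x hx a),
        Finset.sum_const, hcdef, nsmul_eq_mul]
    calc ∑ b, P a b = (∑ b, ∑ x ∈ C, (N x a b : ℝ)) / ((c:ℝ) * n) := by
          simp only [hPdef]
          rw [← Finset.sum_div]
      _ = ((c:ℝ) * (k a : ℝ)) / ((c:ℝ) * n) := by rw [h1]
      _ = (k a : ℝ) / n := mul_div_mul_left _ _ (ne_of_gt hcpos')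
      _ = Q a := (hk a).symm
  obtain ⟨PY, hPYdef⟩ : ∃ PY : Xh → ℝ, PY = fun b => ∑ a, P a b := ⟨_, rfl⟩
  have hPY0 : ∀ b, 0 ≤ PY b := by
    intro b
    simp only [hPYdef]
    exact Finset.sum_nonneg fun a _ => hP0 a b
  have hPYcount : ∀ b, PY b = ((univ.filter fun i => y i = b).card : ℝ) / n := by
    intro b
    have h1 : ∑ a, ∑ x ∈ C, (N x a b : ℝ)
        = (c:ℝ) * ((univ.filter fun i => y i = b).card : ℝ) := by
      rw [Finset.sum_comm]
      have h2 : ∀ x ∈ C, ∑ a, (N x a b : ℝ) = ((univ.filter fun i => y i = b).card : ℝ) := by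
        intro x _
        simp only [hNdef]
        exact_mod_cast (count_split' x y b).symm
      rw [Finset.sum_congr rfl h2, Finset.sum_const, hcdef, nsmul_eq_mul]
    calc PY b = (∑ a, ∑ x ∈ C, (N x a b : ℝ)) / ((c:ℝ) * n) := by
          simp only [hPYdef, hPdef]
          rw [← Finset.sum_div]
      _ = ((c:ℝ) * ((univ.filter fun i => y i = b).card : ℝ)) / ((c:ℝ) * n) := by rw [h1]
      _ = _ := mul_div_mul_left _ _ (ne_of_gt hcpos')
  have hPYpos : ∀ i : Fin n, 0 < PY (y i) := by
    intro i
    rw [hPYcount]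
    have h1 : 0 < (univ.filter fun j => y j = y i).card :=
      Finset.card_pos.2 ⟨i, mem_filter.2 ⟨mem_univ i, rfl⟩⟩
    have h1' : (0:ℝ) < ((univ.filter fun j => y j = y i).card : ℝ) := by exact_mod_cast h1
    positivity
  have hPpos : ∀ x ∈ C, ∀ i : Fin n, 0 < P (x i) (y i) := by
    intro x hx i
    simp only [hPdef]
    apply div_pos _ hcn
    have h1 : 0 < (N x (x i) (y i) : ℝ) := by
      have h2 : 0 < (univ.filter fun j => x j = x i ∧ y j = y i).card :=
        Finset.card_pos.2 ⟨i, mem_filter.2 ⟨mem_univ i, rfl, rfl⟩⟩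
      simp only [hNdef]
      exact_mod_cast h2
    calc (0:ℝ) < (N x (x i) (y i) : ℝ) := h1
      _ ≤ ∑ x' ∈ C, (N x' (x i) (y i) : ℝ) :=
        Finset.single_le_sum (f := fun x' => (N x' (x i) (y i) : ℝ))
          (fun x' _ => Nat.cast_nonneg _) hx
  -- the general exchange identity
  have swap : ∀ g : 𝒳 → Xh → ℝ,
      ∑ a, ∑ b, P a b * g a b
        = (∑ x ∈ C, ∑ a, ∑ b, (N x a b : ℝ) * g a b) / ((c:ℝ) * n) := by
    intro g
    calc ∑ a, ∑ b, P a b * g a b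
        = ∑ a, ∑ b, (∑ x ∈ C, (N x a b : ℝ) * g a b) / ((c:ℝ) * n) := by
          apply Finset.sum_congr rfl; intro a _
          apply Finset.sum_congr rfl; intro b _
          simp only [hPdef]
          rw [div_mul_eq_mul_div, Finset.sum_mul]
      _ = (∑ a, ∑ b, ∑ x ∈ C, (N x a b : ℝ) * g a b) / ((c:ℝ) * n) := by
          rw [Finset.sum_congr rfl fun (a : 𝒳) _ =>
            (Finset.sum_div univ (fun b => ∑ x ∈ C, (N x a b : ℝ) * g a b) ((c:ℝ) * n)).symm,
            ← Finset.sum_div]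
      _ = (∑ x ∈ C, ∑ a, ∑ b, (N x a b : ℝ) * g a b) / ((c:ℝ) * n) := by
          congr 1
          rw [Finset.sum_congr rfl fun a _ => Finset.sum_comm, Finset.sum_comm]
  -- distortion bound
  have hdist : ∑ a, ∑ b, P a b * d a b ≤ D := by
    rw [swap d, div_le_iff₀ hcn]
    have hx : ∀ x ∈ C, ∑ a, ∑ b, (N x a b : ℝ) * d a b ≤ (n:ℝ) * D := by
      intro x hx
      have h1 : distn d x y ≤ D := (hCmem x hx).2
      rw [distn, div_le_iff₀ hn'] at h1
      have h2 : ∑ a, ∑ b, (N x a b : ℝ) * d a b = ∑ i, d (x i) (y i) := by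
        simp only [hNdef]
        exact (sum_count x y d).symm
      rw [h2]
      linarith
    calc ∑ x ∈ C, ∑ a, ∑ b, (N x a b : ℝ) * d a b ≤ ∑ _x ∈ C, (n:ℝ) * D :=
          Finset.sum_le_sum hx
      _ = (c:ℝ) * ((n:ℝ) * D) := by rw [Finset.sum_const, hcdef, nsmul_eq_mul]
      _ = D * ((c:ℝ) * n) := by ring
  -- the channel
  obtain ⟨W, hWdef⟩ : ∃ W : 𝒳 → Xh → ℝ,
      W = fun a b => if Q a = 0 then ((Fintype.card Xh : ℝ))⁻¹ else P a b / Q a := ⟨_, rfl⟩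
  have hcardXh : (0:ℝ) < (Fintype.card Xh : ℝ) := by
    have h := Fintype.card_pos (α := Xh)
    exact_mod_cast h
  have hQW : ∀ a b, Q a * W a b = P a b := by
    intro a b
    simp only [hWdef]
    by_cases h : Q a = 0
    · rw [if_pos h, h, zero_mul]
      have h1 : ∑ b', P a b' = 0 := by rw [hPsum a, h]
      exact ((Finset.sum_eq_zero_iff_of_nonneg fun b' _ => hP0 a b').1 h1 b (mem_univ b)).symm
    · rw [if_neg h]
      field_simp
  have hW : IsChannel W := by
    intro a
    constructor
    · intro b
      simp only [hWdef]
      by_cases h : Q a = 0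
      · rw [if_pos h]
        positivity
      · rw [if_neg h]
        exact div_nonneg (hP0 a b) (hQ0 a)
    · by_cases h : Q a = 0
      · simp only [hWdef, h, if_true]
        rw [Finset.sum_const, Finset.card_univ, nsmul_eq_mul]
        field_simp
      · simp only [hWdef, h, if_false]
        rw [← Finset.sum_div, hPsum a, div_self h]
  have hPW : ∀ b, ∑ a', Q a' * W a' b = PY b := by
    intro b
    simp only [hPYdef]
    exact Finset.sum_congr rfl fun a _ => hQW a b
  -- Gibbs inequality on sequences
  obtain ⟨V, hVdef⟩ : ∃ V : 𝒳 → Xh → ℝ, V = fun a b => P a b / PY b := ⟨_, rfl⟩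
  obtain ⟨ν, hνdef⟩ : ∃ ν : (Fin n → 𝒳) → ℝ, ν = fun x => ∏ i, V (x i) (y i) := ⟨_, rfl⟩
  obtain ⟨μ, hμdef⟩ : ∃ μ : (Fin n → 𝒳) → ℝ,
      μ = fun x => if x ∈ C then ((c:ℝ))⁻¹ else 0 := ⟨_, rfl⟩
  have hμ0 : ∀ x, 0 ≤ μ x := by
    intro x
    simp only [hμdef]
    by_cases h : x ∈ C
    · rw [if_pos h]; positivity
    · rw [if_neg h]
  have hν0 : ∀ x, 0 ≤ ν x := by
    intro x
    simp only [hνdef]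
    exact Finset.prod_nonneg fun i _ => by
      simp only [hVdef]; exact div_nonneg (hP0 _ _) (hPY0 _)
  have hμ1 : ∑ x, μ x = 1 := by
    simp only [hμdef]
    rw [Finset.sum_ite_mem, Finset.univ_inter, Finset.sum_const, ← hcdef, nsmul_eq_mul]
    rw [mul_inv_cancel₀ (ne_of_gt hcpos')]
  have hν1 : ∑ x, ν x = 1 := by
    simp only [hνdef]
    have key : ∑ x : Fin n → 𝒳, ∏ i, V (x i) (y i) = ∏ i, ∑ a, V a (y i) := by
      rw [Finset.prod_univ_sum, Fintype.piFinset_univ]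
    rw [key]
    have h1 : ∀ i : Fin n, ∑ a, V a (y i) = 1 := by
      intro i
      have hPYi : PY (y i) = ∑ a, P a (y i) := by simp only [hPYdef]
      simp only [hVdef]
      rw [← Finset.sum_div, ← hPYi, div_self (ne_of_gt (hPYpos i))]
    rw [Finset.prod_congr rfl fun i _ => h1 i, Finset.prod_const_one]
  have hνC : ∀ x ∈ C, 0 < ν x := by
    intro x hx
    simp only [hνdef]
    exact Finset.prod_pos fun i _ => by
      simp only [hVdef]; exact div_pos (hPpos x hx i) (hPYpos i)
  have habs : ∀ x, ν x = 0 → μ x = 0 := by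
    intro x hx
    simp only [hμdef]
    by_cases h : x ∈ C
    · exact absurd hx (ne_of_gt (hνC x h))
    · rw [if_neg h]
  have hgibbs := gibbs μ ν hμ0 hν0 hμ1 (le_of_eq hν1) habs
  -- rewrite the Gibbs sum
  have e1 : ∑ x, μ x * Real.log (ν x / μ x)
      = ∑ x ∈ C, ((c:ℝ))⁻¹ * (Real.log (ν x) + Real.log c) := by
    rw [← Finset.sum_subset (Finset.subset_univ C)
      (fun x _ hx => by simp only [hμdef, if_neg hx, zero_mul])]
    apply Finset.sum_congr rfl
    intro x hx
    simp only [hμdef, if_pos hx]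
    congr 1
    rw [Real.log_div (ne_of_gt (hνC x hx)) (inv_ne_zero (ne_of_gt hcpos')),
      Real.log_inv, sub_neg_eq_add]
  have e2 : ∀ x ∈ C, Real.log (ν x) = ∑ a, ∑ b, (N x a b : ℝ) * Real.log (V a b) := by
    intro x hx
    simp only [hνdef]
    rw [Real.log_prod (fun i _ => ne_of_gt (by
      simp only [hVdef]; exact div_pos (hPpos x hx i) (hPYpos i)))]
    simp only [hNdef]
    exact sum_count x y (fun a b => Real.log (V a b))
  have e4 : ∑ x ∈ C, Real.log (ν x) = ((c:ℝ) * n) * ∑ a, ∑ b, P a b * Real.log (V a b) := by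
    rw [Finset.sum_congr rfl e2, swap (fun a b => Real.log (V a b))]
    rw [mul_div_cancel₀ _ (ne_of_gt hcn)]
  have hKey : Real.log c + (n:ℝ) * ∑ a, ∑ b, P a b * Real.log (V a b) ≤ 0 := by
    rw [e1] at hgibbs
    have e3 : ∑ x ∈ C, ((c:ℝ))⁻¹ * (Real.log (ν x) + Real.log c)
        = ((c:ℝ))⁻¹ * (∑ x ∈ C, Real.log (ν x)) + Real.log c := by
      rw [← Finset.mul_sum, Finset.sum_add_distrib, Finset.sum_const, ← hcdef, nsmul_eq_mul]
      field_simp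
    rw [e3, e4] at hgibbs
    have e5 : ((c:ℝ))⁻¹ * (((c:ℝ) * n) * ∑ a, ∑ b, P a b * Real.log (V a b))
        = (n:ℝ) * ∑ a, ∑ b, P a b * Real.log (V a b) := by
      field_simp
    rw [e5] at hgibbs
    linarith
  -- relate to mutual information
  have hIeq : ∑ a, ∑ b, P a b * Real.log (V a b)
      = mutInfo Q W + ∑ a, Q a * Real.log (Q a) := by
    simp only [mutInfo]
    rw [← Finset.sum_add_distrib]
    apply Finset.sum_congr rfl
    intro a _
    have hQa : Q a * Real.log (Q a) = ∑ b, P a b * Real.log (Q a) := by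
      rw [← Finset.sum_mul, hPsum a]
    rw [hQa, ← Finset.sum_add_distrib]
    apply Finset.sum_congr rfl
    intro b _
    rcases eq_or_lt_of_le (hP0 a b) with h | h
    · have hWab : Q a * W a b = 0 := by rw [hQW a b, ← h]
      rw [← h, hWab]
      simp
    · have hQa0 : 0 < Q a := by
        rw [← hPsum a]
        calc (0:ℝ) < P a b := h
          _ ≤ ∑ b', P a b' := Finset.single_le_sum (fun b' _ => hP0 a b') (mem_univ b)
      have hPYb : 0 < PY b := by
        simp only [hPYdef]
        calc (0:ℝ) < P a b := h
          _ ≤ ∑ a', P a' b := Finset.single_le_sum (fun a' _ => hP0 a' b) (mem_univ a)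
      have hWab : W a b = P a b / Q a := by
        simp only [hWdef]
        rw [if_neg (ne_of_gt hQa0)]
      have hWabpos : 0 < W a b := by
        rw [hWab]; exact div_pos h hQa0
      have hsplit : V a b = Q a * (W a b / PY b) := by
        simp only [hVdef]
        rw [hWab]
        field_simp
      rw [hPW b, hsplit, Real.log_mul (ne_of_gt hQa0)
        (div_ne_zero (ne_of_gt hWabpos) (ne_of_gt hPYb)), hQW a b]
      ring
  have hnI : (n:ℝ) * mutInfo Q W
      ≤ (n:ℝ) * (-∑ a, Q a * Real.log (Q a)) - Real.log c := by
    rw [hIeq] at hKey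
    have hexp : (n:ℝ) * (mutInfo Q W + ∑ a, Q a * Real.log (Q a))
        = (n:ℝ) * mutInfo Q W + (n:ℝ) * ∑ a, Q a * Real.log (Q a) := by ring
    rw [hexp] at hKey
    have hexp2 : (n:ℝ) * (-∑ a, Q a * Real.log (Q a))
        = -((n:ℝ) * ∑ a, Q a * Real.log (Q a)) := by ring
    rw [hexp2]
    linarith
  -- rate-distortion function bound
  have hRD : RDfun Q d (D + dbar / n) ≤ mutInfo Q W := by
    apply csInf_le
    · refine ⟨0, ?_⟩
      rintro r ⟨W', hW', -, rfl⟩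
      exact mutInfo_nonneg Q W' hQ0 hQ1 hW'
    · refine ⟨W, hW, ?_, rfl⟩
      have h1 : ∑ a, ∑ b, Q a * W a b * d a b = ∑ a, ∑ b, P a b * d a b := by
        apply Finset.sum_congr rfl; intro a _
        apply Finset.sum_congr rfl; intro b _
        rw [hQW a b]
      rw [h1]
      calc ∑ a, ∑ b, P a b * d a b ≤ D := hdist
        _ ≤ D + dbar / n := le_add_of_nonneg_right (div_nonneg hdbar0 hn'.le)
  -- counting bound on the type class
  have hnn : n ^ n ≤ (n + 1) ^ (Fintype.card 𝒳) * Tfin.card * ∏ a, (k a) ^ (k a) := by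
    have h1 := multi_bound (univ : Finset 𝒳) k n (by rw [hsumk])
    rw [Finset.card_univ] at h1
    have h2 := perm_count n k Tfin hmemT' (Finset.card_pos.1 hTpos)
    have h3 : n ^ n * ∏ a, (k a).factorial
        ≤ ((n + 1) ^ (Fintype.card 𝒳) * Tfin.card * ∏ a, (k a) ^ (k a))
            * ∏ a, (k a).factorial := by
      calc n ^ n * ∏ a, (k a).factorial
          ≤ (n + 1) ^ (Fintype.card 𝒳) * n.factorial * ∏ a, (k a) ^ (k a) := h1
        _ ≤ (n + 1) ^ (Fintype.card 𝒳) * (Tfin.card * ∏ a, (k a).factorial)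
              * ∏ a, (k a) ^ (k a) :=
            Nat.mul_le_mul_right _ (Nat.mul_le_mul_left _ h2)
        _ = ((n + 1) ^ (Fintype.card 𝒳) * Tfin.card * ∏ a, (k a) ^ (k a))
              * ∏ a, (k a).factorial := by ring
    exact Nat.le_of_mul_le_mul_right h3 (Finset.prod_pos fun a _ => Nat.factorial_pos _)
  have hlognat : (n:ℝ) * Real.log n ≤ (Fintype.card 𝒳) * Real.log ((n:ℝ) + 1)
      + Real.log (Tfin.card : ℝ) + ∑ a, (k a : ℝ) * Real.log (k a) := by
    have h1 : ((n:ℝ)) ^ n ≤ ((n:ℝ) + 1) ^ (Fintype.card 𝒳) * (Tfin.card : ℝ)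
        * ∏ a, ((k a : ℝ)) ^ (k a) := by
      exact_mod_cast hnn
    have hpos : (0:ℝ) < ((n:ℝ)) ^ n := by positivity
    have hl := Real.log_le_log hpos h1
    rw [Real.log_pow] at hl
    have hne1 : ((n:ℝ) + 1) ^ (Fintype.card 𝒳) ≠ 0 := by positivity
    have hne2 : (Tfin.card : ℝ) ≠ 0 := ne_of_gt hTpos'
    have hkne : ∀ a : 𝒳, ((k a : ℝ)) ^ (k a) ≠ 0 := by
      intro a
      rcases Nat.eq_zero_or_pos (k a) with h | h
      · rw [h]; norm_num
      · have hgt : (0:ℝ) < (k a : ℝ) := by exact_mod_cast h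
        positivity
    have hne3 : (∏ a, ((k a : ℝ)) ^ (k a)) ≠ 0 := Finset.prod_ne_zero_iff.2 fun a _ => hkne a
    rw [Real.log_mul (mul_ne_zero hne1 hne2) hne3, Real.log_mul hne1 hne2,
      Real.log_pow, Real.log_prod (fun a _ => hkne a)] at hl
    have hlog_pow : ∀ a : 𝒳, Real.log (((k a : ℝ)) ^ (k a)) = (k a : ℝ) * Real.log (k a) :=
      fun a => by rw [Real.log_pow]
    rw [Finset.sum_congr rfl fun a _ => hlog_pow a] at hl
    linarith
  have hnH : (n:ℝ) * (-∑ a, Q a * Real.log (Q a))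
      ≤ (Fintype.card 𝒳) * Real.log ((n:ℝ) + 1) + Real.log (Tfin.card : ℝ) := by
    have h1 : (n:ℝ) * (-∑ a, Q a * Real.log (Q a))
        = (n:ℝ) * Real.log n - ∑ a, (k a : ℝ) * Real.log (k a) := by
      have h2 : ∀ a : 𝒳, (n:ℝ) * (Q a * Real.log (Q a))
          = (k a : ℝ) * Real.log (k a) - (k a : ℝ) * Real.log n := by
        intro a
        rcases Nat.eq_zero_or_pos (k a) with h | h
        · have hQa : Q a = 0 := by
            rw [hk a, h]; simp
          rw [hQa, h]; simp
        · have hka : (0:ℝ) < (k a : ℝ) := by exact_mod_cast h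
          rw [hk a, Real.log_div (ne_of_gt hka) (ne_of_gt hn')]
          field_simp
      rw [mul_neg, Finset.mul_sum, Finset.sum_congr rfl fun a _ => h2 a,
        Finset.sum_sub_distrib]
      have h3 : ∑ a, (k a : ℝ) * Real.log n = (n:ℝ) * Real.log n := by
        rw [← Finset.sum_mul]
        have h4 : ∑ a, (k a : ℝ) = (n:ℝ) := by exact_mod_cast hsumk
        rw [h4]
      rw [h3]
      ring
    linarith [hlognat, h1.le, h1.ge]
  -- final combination
  have htnMc : (Tfin.card : ℝ) ≤ (n:ℝ) * ((M:ℝ) * (c:ℝ)) := by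
    have h1 : (G.card : ℝ) ≤ (M:ℝ) * (c:ℝ) := by exact_mod_cast hGM
    calc (Tfin.card : ℝ) ≤ (n:ℝ) * G.card := hGt
      _ ≤ (n:ℝ) * ((M:ℝ) * (c:ℝ)) := mul_le_mul_of_nonneg_left h1 hn'.le
  have hlogt : Real.log (Tfin.card : ℝ) ≤ Real.log n + Real.log M + Real.log c := by
    have hMpos' : (0:ℝ) < (M:ℝ) := by exact_mod_cast hMpos
    calc Real.log (Tfin.card : ℝ) ≤ Real.log ((n:ℝ) * ((M:ℝ) * (c:ℝ))) :=
          Real.log_le_log hTpos' htnMc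
      _ = Real.log n + (Real.log M + Real.log c) := by
          rw [Real.log_mul (ne_of_gt hn') (by positivity),
            Real.log_mul (ne_of_gt hMpos') (ne_of_gt hcpos')]
      _ = Real.log n + Real.log M + Real.log c := by ring
  have hlogn0 : 0 ≤ Real.log n := Real.log_nonneg (by exact_mod_cast hn)
  have hfin : (n:ℝ) * RDfun Q d (D + dbar / n) ≤ (n:ℝ) * mutInfo Q W :=
    mul_le_mul_of_nonneg_left hRD hn'.le
  linarith [hnI, hnH, hlogt, hfin, hlogn0]


end
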